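/- arXiv:1508.01592 — 3 statements merged into one kernel-verified Lean document; each statement's English description precedes it below -/
import Mathlib

section
/- Let κ : [0,∞) → [0,∞) be a continuous, concave, nondecreasing function with κ(r) > 0 for all r > 0 and κ(0) = 0. Let c₄, c₅ > 0 and let b₁ > 0 satisfy c₄·κ(c₅·t) ≤ c₅ for all t ∈ [0,b₁]. Define φ₁(t) = c₅·t and, recursively for n ≥ 1, φ_{n+1}(t) = c₄·∫₀^t κ(φ_n(s)) ds. Then for every n ≥ 1 and every t ∈ [0,b₁], 0 ≤ φ_{n+1}(t) ≤ φ_n(t); in particular, for each t ∈ [0,b₁] the sequence (φ_n(t))_{n≥1} is nonincreasing. -/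
open Set MeasureTheory Filter

/-- The majorant sequence `φ₁(t) = c₅ t`, `φ_{n+1}(t) = c₄ ∫₀ᵗ κ(φ_n(s)) ds` from the
proof of Theorem 3.2 is nonnegative and nonincreasing in `n` on `[0,b₁]`, provided
`c₄ κ(c₅ t) ≤ c₅` on `[0,b₁]`. -/
theorem majorant_sequence_decreasing
    (κ : ℝ → ℝ)
    (hκcont : ContinuousOn κ (Ici 0))
    (hκconc : ConcaveOn ℝ (Ici 0) κ)
    (hκmono : MonotoneOn κ (Ici 0))
    (hκnonneg : ∀ r : ℝ, 0 ≤ r → 0 ≤ κ r)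
    (hκpos : ∀ r : ℝ, 0 < r → 0 < κ r)
    (hκzero : κ 0 = 0)
    (c₄ c₅ b₁ : ℝ) (hc₄ : 0 < c₄) (hc₅ : 0 < c₅) (hb₁ : 0 < b₁)
    (hsmall : ∀ t ∈ Icc (0 : ℝ) b₁, c₄ * κ (c₅ * t) ≤ c₅)
    (φ : ℕ → ℝ → ℝ)
    (hφ₁ : ∀ t : ℝ, φ 1 t = c₅ * t)
    (hφrec : ∀ n : ℕ, 1 ≤ n → ∀ t : ℝ, φ (n + 1) t = c₄ * ∫ s in (0 : ℝ)..t, κ (φ n s)) :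
    ∀ n : ℕ, 1 ≤ n → ∀ t ∈ Icc (0 : ℝ) b₁, 0 ≤ φ (n + 1) t ∧ φ (n + 1) t ≤ φ n t := by
  -- Auxiliary claim: each φ n (n ≥ 1) is continuous on [0,b₁] and 0 ≤ φ n t ≤ c₅ t there.
  have key : ∀ n : ℕ, 1 ≤ n → ContinuousOn (φ n) (Icc 0 b₁) ∧
      ∀ t ∈ Icc (0 : ℝ) b₁, 0 ≤ φ n t ∧ φ n t ≤ c₅ * t := by
    intro n hn
    induction n with
    | zero => omega
    | succ m ih =>
      rcases Nat.eq_or_lt_of_le hn with h1 | h1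
      · -- m + 1 = 1
        have hm : m = 0 := by omega
        subst hm
        constructor
        · exact (continuous_mul_left c₅).continuousOn.congr (fun t _ => hφ₁ t)
        · intro t ht
          rw [hφ₁]
          exact ⟨mul_nonneg hc₅.le ht.1, le_rfl⟩
      · have hm : 1 ≤ m := by omega
        obtain ⟨ihc, ihb⟩ := ih hm
        -- integrand properties
        have hmaps : MapsTo (φ m) (Icc 0 b₁) (Ici 0) := fun t ht => (ihb t ht).1
        have hgc : ContinuousOn (fun s => κ (φ m s)) (Icc 0 b₁) :=
          hκcont.comp ihc hmaps
        have hint : IntegrableOn (fun s => κ (φ m s)) (Icc 0 b₁) volume :=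
          hgc.integrableOn_Icc
        have hgnn : ∀ s ∈ Icc (0:ℝ) b₁, 0 ≤ κ (φ m s) := fun s hs =>
          hκnonneg _ (ihb s hs).1
        have hgle : ∀ s ∈ Icc (0:ℝ) b₁, c₄ * κ (φ m s) ≤ c₅ := by
          intro s hs
          have h1 : κ (φ m s) ≤ κ (c₅ * s) := by
            apply hκmono (ihb s hs).1 (mul_nonneg hc₅.le hs.1) (ihb s hs).2
          calc c₄ * κ (φ m s) ≤ c₄ * κ (c₅ * s) := by nlinarith
            _ ≤ c₅ := hsmall s hs
        constructor
        · have hprim : ContinuousOn (fun x => ∫ s in Ioc (0:ℝ) x, κ (φ m s)) (Icc 0 b₁) :=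
            intervalIntegral.continuousOn_primitive hint
          have : ContinuousOn (fun x => c₄ * ∫ s in (0:ℝ)..x, κ (φ m s)) (Icc 0 b₁) := by
            refine (continuousOn_const.mul (hprim.congr ?_))
            intro x hx
            exact intervalIntegral.integral_of_le hx.1
          exact this.congr (fun t _ => hφrec m hm t)
        · intro t ht
          rw [hφrec m hm t]
          have hsub : Icc (0:ℝ) t ⊆ Icc 0 b₁ := Icc_subset_Icc le_rfl ht.2
          have hii : IntervalIntegrable (fun s => κ (φ m s)) volume 0 t :=
            (hgc.mono (by rw [uIcc_of_le ht.1]; exact hsub)).intervalIntegrable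
          constructor
          · apply mul_nonneg hc₄.le
            apply intervalIntegral.integral_nonneg ht.1
            intro s hs
            exact hgnn s (hsub hs)
          · have : (∫ s in (0:ℝ)..t, κ (φ m s)) ≤ ∫ s in (0:ℝ)..t, c₅ / c₄ := by
              apply intervalIntegral.integral_mono_on ht.1 hii intervalIntegrable_const
              intro s hs
              have := hgle s (hsub hs)
              rw [le_div_iff₀ hc₄] at *
              linarith [hgle s (hsub hs)]
            rw [intervalIntegral.integral_const, smul_eq_mul] at this
            calc c₄ * ∫ s in (0:ℝ)..t, κ (φ m s) ≤ c₄ * (t * (c₅ / c₄)) := by nlinarith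
              _ = c₅ * t := by field_simp
  -- Main induction
  intro n hn
  induction n with
  | zero => omega
  | succ m ih =>
    intro t ht
    obtain ⟨ihc, ihb⟩ := key (m+1) (by omega)
    have hmaps : MapsTo (φ (m+1)) (Icc 0 b₁) (Ici 0) := fun s hs => (ihb s hs).1
    have hgc : ContinuousOn (fun s => κ (φ (m+1) s)) (Icc 0 b₁) := hκcont.comp ihc hmaps
    have hsub : Icc (0:ℝ) t ⊆ Icc 0 b₁ := Icc_subset_Icc le_rfl ht.2
    have hii : IntervalIntegrable (fun s => κ (φ (m+1) s)) volume 0 t :=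
      (hgc.mono (by rw [uIcc_of_le ht.1]; exact hsub)).intervalIntegrable
    have hnn : 0 ≤ φ (m + 1 + 1) t := by
      rw [hφrec (m+1) (by omega) t]
      apply mul_nonneg hc₄.le
      apply intervalIntegral.integral_nonneg ht.1
      intro s hs
      exact hκnonneg _ ((ihb s (hsub hs)).1)
    refine ⟨hnn, ?_⟩
    rcases Nat.eq_or_lt_of_le hn with h1 | h1
    · -- m + 1 = 1, compare with φ 1 = c₅ t
      have hm : m = 0 := by omega
      subst hm
      rw [hφrec 1 le_rfl t, hφ₁]
      have : (∫ s in (0:ℝ)..t, κ (φ 1 s)) ≤ ∫ s in (0:ℝ)..t, c₅ / c₄ := by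
        apply intervalIntegral.integral_mono_on ht.1 hii intervalIntegrable_const
        intro s hs
        rw [hφ₁, le_div_iff₀ hc₄]
        have := hsmall s (hsub hs)
        linarith
      rw [intervalIntegral.integral_const, smul_eq_mul] at this
      calc c₄ * ∫ s in (0:ℝ)..t, κ (φ 1 s) ≤ c₄ * (t * (c₅ / c₄)) := by nlinarith
        _ = c₅ * t := by field_simp
    · have hm : 1 ≤ m := by omega
      have ih' := ih hm
      obtain ⟨imc, imb⟩ := key m hm
      have hmaps' : MapsTo (φ m) (Icc 0 b₁) (Ici 0) := fun s hs => (imb s hs).1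
      have hgc' : ContinuousOn (fun s => κ (φ m s)) (Icc 0 b₁) := hκcont.comp imc hmaps'
      have hii' : IntervalIntegrable (fun s => κ (φ m s)) volume 0 t :=
        (hgc'.mono (by rw [uIcc_of_le ht.1]; exact hsub)).intervalIntegrable
      rw [hφrec (m+1) (by omega) t, hφrec m hm t]
      have : (∫ s in (0:ℝ)..t, κ (φ (m+1) s)) ≤ ∫ s in (0:ℝ)..t, κ (φ m s) := by
        apply intervalIntegral.integral_mono_on ht.1 hii hii'
        intro s hs
        have hs' := hsub hs
        exact hκmono ((ihb s hs').1) ((imb s hs').1) ((ih' s hs').2)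
      nlinarith
end

section
/- Let κ : [0,∞) → [0,∞) be a continuous, concave, nondecreasing function with κ(r) > 0 for all r > 0 and κ(0) = 0. Let c₄, c₅ > 0 and let b₁ > 0 satisfy c₄·κ(c₅·t) ≤ c₅ for all t ∈ [0,b₁]. Define φ₁(t) = c₅·t and, recursively for n ≥ 1, φ_{n+1}(t) = c₄·∫₀^t κ(φ_n(s)) ds. Then the pointwise limit φ(t) = lim_{n→∞} φ_n(t) exists for every t ∈ [0,b₁] and satisfies the integral equation φ(t) = c₄·∫₀^t κ(φ(s)) ds for all t ∈ [0,b₁]. -/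
open Set MeasureTheory Filter

/-- The majorant sequence `φ₁(t) = c₅ t`, `φ_{n+1}(t) = c₄ ∫₀ᵗ κ(φ_n(s)) ds` from the
proof of Theorem 3.2 converges pointwise on `[0,b₁]` to a limit `φ` satisfying the
integral equation `φ(t) = c₄ ∫₀ᵗ κ(φ(s)) ds`. -/
theorem majorant_sequence_limit
    (κ : ℝ → ℝ)
    (hκcont : ContinuousOn κ (Ici 0))
    (hκconc : ConcaveOn ℝ (Ici 0) κ)
    (hκmono : MonotoneOn κ (Ici 0))
    (hκnonneg : ∀ r : ℝ, 0 ≤ r → 0 ≤ κ r)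
    (hκpos : ∀ r : ℝ, 0 < r → 0 < κ r)
    (hκzero : κ 0 = 0)
    (c₄ c₅ b₁ : ℝ) (hc₄ : 0 < c₄) (hc₅ : 0 < c₅) (hb₁ : 0 < b₁)
    (hsmall : ∀ t ∈ Icc (0 : ℝ) b₁, c₄ * κ (c₅ * t) ≤ c₅)
    (φ : ℕ → ℝ → ℝ)
    (hφ₁ : ∀ t : ℝ, φ 1 t = c₅ * t)
    (hφrec : ∀ n : ℕ, 1 ≤ n → ∀ t : ℝ, φ (n + 1) t = c₄ * ∫ s in (0 : ℝ)..t, κ (φ n s)) :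
    ∃ φlim : ℝ → ℝ,
      (∀ t ∈ Icc (0 : ℝ) b₁, Tendsto (fun n : ℕ => φ n t) atTop (nhds (φlim t))) ∧
      (∀ t ∈ Icc (0 : ℝ) b₁, φlim t = c₄ * ∫ s in (0 : ℝ)..t, κ (φlim s)) := by
  -- bound on κ(c₅ s)
  have hκbd : ∀ s ∈ Icc (0 : ℝ) b₁, κ (c₅ * s) ≤ c₅ / c₄ := by
    intro s hs
    rw [le_div_iff₀ hc₄, mul_comm]
    exact hsmall s hs
  -- main induction: continuity and bounds
  have key : ∀ n : ℕ, 1 ≤ n → ContinuousOn (φ n) (Icc 0 b₁) ∧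
      ∀ t ∈ Icc (0 : ℝ) b₁, 0 ≤ φ n t ∧ φ n t ≤ c₅ * t := by
    intro n hn
    induction n with
    | zero => omega
    | succ m ih =>
      rcases Nat.eq_or_lt_of_le hn with h1 | h1
      · -- m + 1 = 1
        have hm : m = 0 := by omega
        subst hm
        constructor
        · exact (continuousOn_congr (fun t _ => hφ₁ t)).mpr
            ((continuous_const.mul continuous_id).continuousOn)
        · intro t ht
          rw [hφ₁]
          exact ⟨mul_nonneg hc₅.le ht.1, le_rfl⟩
      · -- m ≥ 1
        have hm : 1 ≤ m := by omega
        obtain ⟨ihcont, ihbd⟩ := ih hm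
        -- the integrand is continuous on Icc 0 b₁
        have hgcont : ContinuousOn (fun s => κ (φ m s)) (Icc 0 b₁) := by
          apply hκcont.comp ihcont
          intro s hs
          exact (ihbd s hs).1
        have hgnonneg : ∀ s ∈ Icc (0 : ℝ) b₁, 0 ≤ κ (φ m s) :=
          fun s hs => hκnonneg _ (ihbd s hs).1
        have hgbd : ∀ s ∈ Icc (0 : ℝ) b₁, κ (φ m s) ≤ c₅ / c₄ := by
          intro s hs
          refine le_trans ?_ (hκbd s hs)
          exact hκmono (ihbd s hs).1 (mul_nonneg hc₅.le hs.1) (ihbd s hs).2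
        constructor
        · have : ContinuousOn (fun t => c₄ * ∫ s in (0:ℝ)..t, κ (φ m s)) (Icc 0 b₁) := by
            apply continuousOn_const.mul
            have h0 : (0:ℝ) ∈ uIcc (0:ℝ) b₁ := left_mem_uIcc
            have := intervalIntegral.continuousOn_primitive_interval'
              (f := fun s => κ (φ m s)) (μ := volume) (b₁ := (0:ℝ)) (b₂ := b₁)
              ?_ h0
            · rwa [uIcc_of_le hb₁.le] at this
            · apply ContinuousOn.intervalIntegrable
              rwa [uIcc_of_le hb₁.le]
          exact (continuousOn_congr (fun t _ => hφrec m hm t)).mpr this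
        · intro t ht
          rw [hφrec m hm t]
          have hIcc : Icc (0:ℝ) t ⊆ Icc 0 b₁ := Icc_subset_Icc le_rfl ht.2
          have hint : IntervalIntegrable (fun s => κ (φ m s)) volume 0 t := by
            apply ContinuousOn.intervalIntegrable
            rw [uIcc_of_le ht.1]
            exact hgcont.mono hIcc
          constructor
          · apply mul_nonneg hc₄.le
            apply intervalIntegral.integral_nonneg ht.1
            intro s hs
            exact hgnonneg s (hIcc hs)
          · have : (∫ s in (0:ℝ)..t, κ (φ m s)) ≤ ∫ s in (0:ℝ)..t, c₅ / c₄ := by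
              apply intervalIntegral.integral_mono_on ht.1 hint intervalIntegrable_const
              intro s hs
              exact hgbd s (hIcc hs)
            calc c₄ * ∫ s in (0:ℝ)..t, κ (φ m s) ≤ c₄ * (t * (c₅ / c₄)) := by
                  rw [intervalIntegral.integral_const] at this
                  simpa using mul_le_mul_of_nonneg_left this hc₄.le
              _ = c₅ * t := by field_simp
  -- antitone step
  have step : ∀ n : ℕ, 1 ≤ n → ∀ t ∈ Icc (0 : ℝ) b₁, φ (n + 1) t ≤ φ n t := by
    intro n hn
    induction n with
    | zero => omega
    | succ m ih =>
      rcases Nat.eq_or_lt_of_le hn with h1 | h1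
      · have hm : m = 0 := by omega
        subst hm
        intro t ht
        rw [hφrec 1 le_rfl t, hφ₁]
        have hIcc : Icc (0:ℝ) t ⊆ Icc 0 b₁ := Icc_subset_Icc le_rfl ht.2
        have hint : IntervalIntegrable (fun s => κ (φ 1 s)) volume 0 t := by
          apply ContinuousOn.intervalIntegrable
          rw [uIcc_of_le ht.1]
          exact (hκcont.comp (key 1 le_rfl).1
            (fun s hs => ((key 1 le_rfl).2 s hs).1)).mono hIcc
        have : (∫ s in (0:ℝ)..t, κ (φ 1 s)) ≤ ∫ s in (0:ℝ)..t, c₅ / c₄ := by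
          apply intervalIntegral.integral_mono_on ht.1 hint intervalIntegrable_const
          intro s hs
          rw [hφ₁]
          exact hκbd s (hIcc hs)
        calc c₄ * ∫ s in (0:ℝ)..t, κ (φ 1 s) ≤ c₄ * (t * (c₅ / c₄)) := by
              rw [intervalIntegral.integral_const] at this
              simpa using mul_le_mul_of_nonneg_left this hc₄.le
          _ = c₅ * t := by field_simp
      · have hm : 1 ≤ m := by omega
        intro t ht
        rw [hφrec (m + 1) (by omega) t, hφrec m hm t]
        apply mul_le_mul_of_nonneg_left _ hc₄.le
        have hIcc : Icc (0:ℝ) t ⊆ Icc 0 b₁ := Icc_subset_Icc le_rfl ht.2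
        have hint1 : IntervalIntegrable (fun s => κ (φ (m+1) s)) volume 0 t := by
          apply ContinuousOn.intervalIntegrable
          rw [uIcc_of_le ht.1]
          exact ((hκcont.comp (key (m+1) (by omega)).1
            (fun s hs => ((key (m+1) (by omega)).2 s hs).1)).mono hIcc)
        have hint2 : IntervalIntegrable (fun s => κ (φ m s)) volume 0 t := by
          apply ContinuousOn.intervalIntegrable
          rw [uIcc_of_le ht.1]
          exact ((hκcont.comp (key m hm).1
            (fun s hs => ((key m hm).2 s hs).1)).mono hIcc)
        apply intervalIntegral.integral_mono_on ht.1 hint1 hint2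
        intro s hs
        exact hκmono ((key (m+1) (by omega)).2 s (hIcc hs)).1
          ((key m hm).2 s (hIcc hs)).1 (ih hm s (hIcc hs))
  -- define the limit
  set φlim : ℝ → ℝ := fun t => ⨅ n : ℕ, φ (n + 1) t with hφlim
  have hanti : ∀ t ∈ Icc (0 : ℝ) b₁, Antitone (fun n : ℕ => φ (n + 1) t) := by
    intro t ht
    apply antitone_nat_of_succ_le
    intro n
    exact step (n + 1) (by omega) t ht
  have hbdd : ∀ t ∈ Icc (0 : ℝ) b₁, BddBelow (range (fun n : ℕ => φ (n + 1) t)) := by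
    intro t ht
    refine ⟨0, ?_⟩
    rintro x ⟨n, rfl⟩
    exact ((key (n + 1) (by omega)).2 t ht).1
  have htendsto : ∀ t ∈ Icc (0 : ℝ) b₁,
      Tendsto (fun n : ℕ => φ (n + 1) t) atTop (nhds (φlim t)) := by
    intro t ht
    exact tendsto_atTop_ciInf (hanti t ht) (hbdd t ht)
  have htendsto' : ∀ t ∈ Icc (0 : ℝ) b₁,
      Tendsto (fun n : ℕ => φ n t) atTop (nhds (φlim t)) := by
    intro t ht
    rw [← tendsto_add_atTop_iff_nat 1]
    exact htendsto t ht
  refine ⟨φlim, htendsto', ?_⟩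
  -- limit properties
  have hlimnonneg : ∀ t ∈ Icc (0 : ℝ) b₁, 0 ≤ φlim t := by
    intro t ht
    apply le_ciInf
    intro n
    exact ((key (n + 1) (by omega)).2 t ht).1
  have hlimle : ∀ t ∈ Icc (0 : ℝ) b₁, φlim t ≤ c₅ * t := by
    intro t ht
    exact le_trans (ciInf_le (hbdd t ht) 0) (le_of_eq (hφ₁ t))
  -- integral equation via dominated convergence
  intro t ht
  have hIoc : uIoc (0:ℝ) t ⊆ Icc 0 b₁ := by
    rw [uIoc_of_le ht.1]
    exact (Ioc_subset_Icc_self).trans (Icc_subset_Icc le_rfl ht.2)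
  have hDCT : Tendsto (fun n : ℕ => ∫ s in (0:ℝ)..t, κ (φ (n + 1) s)) atTop
      (nhds (∫ s in (0:ℝ)..t, κ (φlim s))) := by
    apply intervalIntegral.tendsto_integral_filter_of_dominated_convergence
      (fun _ => c₅ / c₄)
    · filter_upwards with n
      apply ContinuousOn.aestronglyMeasurable _ measurableSet_uIoc
      exact (hκcont.comp (key (n+1) (by omega)).1
        (fun s hs => ((key (n+1) (by omega)).2 s hs).1)).mono hIoc
    · filter_upwards with n
      filter_upwards with s hs
      have hs' := hIoc hs
      have h1 := ((key (n+1) (by omega)).2 s hs').1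
      have h2 := ((key (n+1) (by omega)).2 s hs').2
      rw [Real.norm_eq_abs, abs_of_nonneg (hκnonneg _ h1)]
      exact le_trans (hκmono h1 (mul_nonneg hc₅.le hs'.1) h2) (hκbd s hs')
    · exact intervalIntegrable_const
    · filter_upwards with s hs
      have hs' := hIoc hs
      have hκct : ContinuousWithinAt κ (Ici 0) (φlim s) := hκcont _ (hlimnonneg s hs')
      apply hκct.tendsto.comp
      rw [tendsto_nhdsWithin_iff]
      refine ⟨htendsto s hs', ?_⟩
      filter_upwards with n
      exact ((key (n+1) (by omega)).2 s hs').1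
  have h2 : Tendsto (fun n : ℕ => φ (n + 2) t) atTop (nhds (c₄ * ∫ s in (0:ℝ)..t, κ (φlim s))) := by
    have := hDCT.const_mul c₄
    apply this.congr
    intro n
    exact (hφrec (n + 1) (by omega) t).symm
  have h3 : Tendsto (fun n : ℕ => φ (n + 2) t) atTop (nhds (φlim t)) := by
    have := htendsto' t ht
    rw [← tendsto_add_atTop_iff_nat 2] at this
    exact this
  exact tendsto_nhds_unique h3 h2
end

section
/- Let κ : [0,∞) → [0,∞) be a continuous, concave, nondecreasing function with κ(r) > 0 for all r > 0, κ(0) = 0, and satisfying the divergence condition ∫₀₊ ds/κ(s) = ∞ (i.e. for some, equivalently every, ε > 0, ∫_s^ε du/κ(u) → ∞ as s → 0⁺). Let c₄, c₅ > 0 and let b₁ > 0 satisfy c₄·κ(c₅·t) ≤ c₅ for all t ∈ [0,b₁]. Define φ₁(t) = c₅·t and, recursively for n ≥ 1, φ_{n+1}(t) = c₄·∫₀^t κ(φ_n(s)) ds. Then φ_n(t) → 0 as n → ∞ for every t ∈ [0,b₁]. -/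
open Set MeasureTheory Filter

/-- Under the divergence condition `∫₀₊ ds/κ(s) = ∞`, the majorant sequence
`φ₁(t) = c₅ t`, `φ_{n+1}(t) = c₄ ∫₀ᵗ κ(φ_n(s)) ds` from the proof of Theorem 3.2
tends to `0` pointwise on `[0,b₁]`. -/
theorem majorant_sequence_tendsto_zero
    (κ : ℝ → ℝ)
    (hκcont : ContinuousOn κ (Ici 0))
    (hκconc : ConcaveOn ℝ (Ici 0) κ)
    (hκmono : MonotoneOn κ (Ici 0))
    (hκnonneg : ∀ r : ℝ, 0 ≤ r → 0 ≤ κ r)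
    (hκpos : ∀ r : ℝ, 0 < r → 0 < κ r)
    (hκzero : κ 0 = 0)
    (hκdiv : ∀ ε : ℝ, 0 < ε →
      Tendsto (fun s : ℝ => ∫ x in s..ε, 1 / κ x) (nhdsWithin 0 (Ioi 0)) atTop)
    (c₄ c₅ b₁ : ℝ) (hc₄ : 0 < c₄) (hc₅ : 0 < c₅) (hb₁ : 0 < b₁)
    (hsmall : ∀ t ∈ Icc (0 : ℝ) b₁, c₄ * κ (c₅ * t) ≤ c₅)
    (φ : ℕ → ℝ → ℝ)
    (hφ₁ : ∀ t : ℝ, φ 1 t = c₅ * t)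
    (hφrec : ∀ n : ℕ, 1 ≤ n → ∀ t : ℝ, φ (n + 1) t = c₄ * ∫ s in (0 : ℝ)..t, κ (φ n s)) :
    ∀ t ∈ Icc (0 : ℝ) b₁, Tendsto (fun n : ℕ => φ n t) atTop (nhds 0) := by
  have hb₁' : (0:ℝ) ≤ b₁ := hb₁.le
  set I : Set ℝ := Icc (0:ℝ) b₁ with hIdef
  have k1 : ∀ n : ℕ, 1 ≤ n + 1 := fun n => Nat.succ_le_succ n.zero_le
  -- basic κ bound
  have hκb : ∀ s ∈ I, ∀ y : ℝ, 0 ≤ y → y ≤ c₅ * s → κ y ≤ c₅ / c₄ := by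
    intro s hs y hy hy'
    have hcs : (0:ℝ) ≤ c₅ * s := mul_nonneg hc₅.le hs.1
    have h1 : κ y ≤ κ (c₅ * s) := hκmono (mem_Ici.2 hy) (mem_Ici.2 hcs) hy'
    have h2 := hsmall s hs
    rw [le_div_iff₀ hc₄]
    nlinarith
  -- Claim 1 : continuity and bounds
  have key : ∀ n : ℕ, 1 ≤ n →
      ContinuousOn (φ n) I ∧ ∀ t ∈ I, 0 ≤ φ n t ∧ φ n t ≤ c₅ * t := by
    intro n hn
    induction n with
    | zero => omega
    | succ n ih =>
      rcases Nat.lt_or_ge n 1 with hn1 | hn1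
      · have hn0 : n = 0 := by omega
        subst hn0
        constructor
        · exact (continuousOn_const.mul continuousOn_id).congr fun t _ => hφ₁ t
        · intro t ht
          rw [hφ₁]
          exact ⟨mul_nonneg hc₅.le ht.1, le_rfl⟩
      · obtain ⟨hcont, hbnd⟩ := ih hn1
        have hgc : ContinuousOn (fun s => κ (φ n s)) I :=
          hκcont.comp hcont fun s hs => mem_Ici.2 (hbnd s hs).1
        have hgint : ∀ t ∈ I, IntervalIntegrable (fun s => κ (φ n s)) volume 0 t := by
          intro t ht
          apply ContinuousOn.intervalIntegrable
          rw [uIcc_of_le ht.1]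
          exact hgc.mono (Icc_subset_Icc le_rfl ht.2)
        constructor
        · have h1 : ContinuousOn (fun t => c₄ * ∫ s in (0:ℝ)..t, κ (φ n s)) I := by
            apply continuousOn_const.mul
            have h2 : IntegrableOn (fun s => κ (φ n s)) (uIcc (0:ℝ) b₁) volume := by
              rw [uIcc_of_le hb₁']; exact hgc.integrableOn_Icc
            have := intervalIntegral.continuousOn_primitive_interval h2
            rwa [uIcc_of_le hb₁'] at this
          exact h1.congr fun t _ => hφrec n hn1 t
        · intro t ht
          rw [hφrec n hn1 t]
          have h0t : ∀ x ∈ Icc (0:ℝ) t, x ∈ I := fun x hx => ⟨hx.1, hx.2.trans ht.2⟩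
          have hnn : 0 ≤ ∫ s in (0:ℝ)..t, κ (φ n s) :=
            intervalIntegral.integral_nonneg ht.1 fun u hu =>
              hκnonneg _ (hbnd u (h0t u hu)).1
          refine ⟨mul_nonneg hc₄.le hnn, ?_⟩
          have hle : (∫ s in (0:ℝ)..t, κ (φ n s)) ≤ ∫ _ in (0:ℝ)..t, (c₅ / c₄) := by
            apply intervalIntegral.integral_mono_on ht.1 (hgint t ht) intervalIntegrable_const
            intro x hx
            exact hκb x (h0t x hx) _ (hbnd x (h0t x hx)).1 (hbnd x (h0t x hx)).2
          rw [intervalIntegral.integral_const, smul_eq_mul] at hle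
          have h3 : c₄ * (∫ s in (0:ℝ)..t, κ (φ n s)) ≤ c₄ * ((t - 0) * (c₅ / c₄)) :=
            mul_le_mul_of_nonneg_left hle hc₄.le
          have h4 : c₄ * ((t - 0) * (c₅ / c₄)) = c₅ * t := by field_simp; ring
          linarith
  -- interval integrability of κ ∘ φ n
  have hgint : ∀ n, 1 ≤ n → ∀ t ∈ I, IntervalIntegrable (fun s => κ (φ n s)) volume 0 t := by
    intro n hn t ht
    apply ContinuousOn.intervalIntegrable
    rw [uIcc_of_le ht.1]
    exact (hκcont.comp (key n hn).1 fun s hs => mem_Ici.2 ((key n hn).2 s hs).1).mono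
      (Icc_subset_Icc le_rfl ht.2)
  -- Claim 2 : antitone in n
  have hanti : ∀ n, 1 ≤ n → ∀ t ∈ I, φ (n+1) t ≤ φ n t := by
    intro n hn
    induction n with
    | zero => omega
    | succ n ih =>
      rcases Nat.lt_or_ge n 1 with hn1 | hn1
      · have hn0 : n = 0 := by omega
        subst hn0
        intro t ht
        rw [hφ₁ t]
        exact ((key 2 (by norm_num)).2 t ht).2
      · intro t ht
        rw [hφrec (n+1) (k1 n) t, hφrec n hn1 t]
        apply mul_le_mul_of_nonneg_left ?_ hc₄.le
        apply intervalIntegral.integral_mono_on ht.1 (hgint (n+1) (k1 n) t ht)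
          (hgint n hn1 t ht)
        intro x hx
        have hxI : x ∈ I := ⟨hx.1, hx.2.trans ht.2⟩
        exact hκmono (mem_Ici.2 ((key (n+1) (k1 n)).2 x hxI).1)
          (mem_Ici.2 ((key n hn1).2 x hxI).1) (ih hn1 x hxI)
  -- the limit function
  set ψ : ℝ → ℝ := fun t => ⨅ n : ℕ, φ (n+1) t with hψdef
  have hbdd : ∀ t ∈ I, BddBelow (range fun n : ℕ => φ (n+1) t) := by
    intro t ht
    refine ⟨0, ?_⟩
    rintro x ⟨n, rfl⟩
    exact ((key (n+1) (k1 n)).2 t ht).1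
  have hmono_seq : ∀ t ∈ I, Antitone fun n : ℕ => φ (n+1) t := by
    intro t ht
    exact antitone_nat_of_succ_le fun n => hanti (n+1) (k1 n) t ht
  have htend : ∀ t ∈ I, Tendsto (fun n : ℕ => φ (n+1) t) atTop (nhds (ψ t)) :=
    fun t ht => tendsto_atTop_ciInf (hmono_seq t ht) (hbdd t ht)
  have hψ0 : ∀ t ∈ I, 0 ≤ ψ t :=
    fun t ht => le_ciInf fun n => ((key (n+1) (k1 n)).2 t ht).1
  have hψle : ∀ t ∈ I, ψ t ≤ c₅ * t := by
    intro t ht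
    have := ciInf_le (hbdd t ht) 0
    rwa [hφ₁ t] at this
  -- monotonicity of each φ (n+1) and of ψ on I
  have hφmono : ∀ n : ℕ, ∀ t ∈ I, ∀ t' ∈ I, t ≤ t' → φ (n+1) t ≤ φ (n+1) t' := by
    intro n t ht t' ht' htt'
    rcases Nat.lt_or_ge n 1 with hn1 | hn1
    · have hn0 : n = 0 := by omega
      subst hn0
      rw [hφ₁, hφ₁]
      exact mul_le_mul_of_nonneg_left htt' hc₅.le
    · rw [hφrec n hn1 t, hφrec n hn1 t']
      apply mul_le_mul_of_nonneg_left ?_ hc₄.le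
      have h1 := hgint n hn1 t ht
      have h2 : IntervalIntegrable (fun s => κ (φ n s)) volume t t' := by
        apply ContinuousOn.intervalIntegrable
        rw [uIcc_of_le htt']
        exact (hκcont.comp (key n hn1).1 fun s hs => mem_Ici.2 ((key n hn1).2 s hs).1).mono
          (Icc_subset_Icc ht.1 ht'.2)
      rw [← intervalIntegral.integral_add_adjacent_intervals h1 h2]
      have h3 : 0 ≤ ∫ s in t..t', κ (φ n s) :=
        intervalIntegral.integral_nonneg htt' fun u hu =>
          hκnonneg _ ((key n hn1).2 u ⟨ht.1.trans hu.1, hu.2.trans ht'.2⟩).1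
      linarith
  have hψmono : ∀ t ∈ I, ∀ t' ∈ I, t ≤ t' → ψ t ≤ ψ t' :=
    fun t ht t' ht' h => ciInf_mono (hbdd t ht) fun n => hφmono n t ht t' ht' h
  -- pointwise convergence of κ ∘ φ (n+1)
  have hptwise : ∀ s ∈ I, Tendsto (fun n : ℕ => κ (φ (n+1) s)) atTop (nhds (κ (ψ s))) := by
    intro s hs
    have h1 : Tendsto (fun n : ℕ => φ (n+1) s) atTop (nhdsWithin (ψ s) (Ici 0)) := by
      rw [tendsto_nhdsWithin_iff]
      exact ⟨htend s hs, Eventually.of_forall fun n => mem_Ici.2 ((key (n+1) (k1 n)).2 s hs).1⟩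
    exact ((hκcont (ψ s) (mem_Ici.2 (hψ0 s hs))).tendsto).comp h1
  have hFncont : ∀ n : ℕ, ContinuousOn (fun s => κ (φ (n+1) s)) I := fun n =>
    hκcont.comp (key (n+1) (k1 n)).1 fun s hs => mem_Ici.2 ((key (n+1) (k1 n)).2 s hs).1
  -- the integral equation for ψ
  have hψeq : ∀ t ∈ I, ψ t = c₄ * ∫ s in (0:ℝ)..t, κ (ψ s) := by
    intro t ht
    have hsub : Ioc (0:ℝ) t ⊆ I := fun x hx => ⟨hx.1.le, hx.2.trans ht.2⟩
    have hL : Tendsto (fun n : ℕ => φ (n+2) t) atTop (nhds (ψ t)) := by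
      have := (htend t ht).comp (tendsto_add_atTop_nat 1)
      exact this
    have hR : Tendsto (fun n : ℕ => ∫ s in Ioc (0:ℝ) t, κ (φ (n+1) s)) atTop
        (nhds (∫ s in Ioc (0:ℝ) t, κ (ψ s))) := by
      apply MeasureTheory.tendsto_integral_of_dominated_convergence (fun _ => c₅ / c₄)
      · intro n
        exact ((hFncont n).mono hsub).aestronglyMeasurable measurableSet_Ioc
      · exact integrableOn_const measure_Ioc_lt_top.ne
      · intro n
        filter_upwards [ae_restrict_mem measurableSet_Ioc] with s hs
        have hsI := hsub hs
        rw [Real.norm_eq_abs, abs_of_nonneg (hκnonneg _ ((key (n+1) (k1 n)).2 s hsI).1)]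
        exact hκb s hsI _ ((key (n+1) (k1 n)).2 s hsI).1 ((key (n+1) (k1 n)).2 s hsI).2
      · filter_upwards [ae_restrict_mem measurableSet_Ioc] with s hs using hptwise s (hsub hs)
    have heq : ∀ n : ℕ, φ (n+2) t = c₄ * ∫ s in Ioc (0:ℝ) t, κ (φ (n+1) s) := by
      intro n
      rw [show n + 2 = (n+1) + 1 from rfl, hφrec (n+1) (k1 n) t,
        intervalIntegral.integral_of_le ht.1]
    have hL2 : Tendsto (fun n : ℕ => φ (n+2) t) atTop
        (nhds (c₄ * ∫ s in Ioc (0:ℝ) t, κ (ψ s))) := by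
      simp_rw [heq]
      exact hR.const_mul c₄
    have := tendsto_nhds_unique hL hL2
    rw [this, intervalIntegral.integral_of_le ht.1]
  -- integrability and continuity of ψ
  have hSM : ∀ n, AEStronglyMeasurable (fun s => κ (φ (n+1) s)) (volume.restrict I) :=
    fun n => (hFncont n).aestronglyMeasurable measurableSet_Icc
  have hψSM : AEStronglyMeasurable (fun s => κ (ψ s)) (volume.restrict I) := by
    apply aestronglyMeasurable_of_tendsto_ae atTop hSM
    filter_upwards [ae_restrict_mem measurableSet_Icc] with s hs using hptwise s hs
  have hψint : IntegrableOn (fun s => κ (ψ s)) I volume := by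
    apply Integrable.mono' (integrableOn_const (C := c₅ / c₄) measure_Icc_lt_top.ne) hψSM
    filter_upwards [ae_restrict_mem measurableSet_Icc] with s hs
    rw [Real.norm_eq_abs, abs_of_nonneg (hκnonneg _ (hψ0 s hs))]
    exact hκb s hs _ (hψ0 s hs) (hψle s hs)
  have hψIInt : ∀ t₁ t₂ : ℝ, t₁ ∈ I → t₂ ∈ I →
      IntervalIntegrable (fun s => κ (ψ s)) volume t₁ t₂ := by
    intro t₁ t₂ h1 h2
    apply IntegrableOn.intervalIntegrable
    apply hψint.mono_set
    intro x hx
    rcases le_total t₁ t₂ with h | h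
    · rw [uIcc_of_le h] at hx; exact ⟨h1.1.trans hx.1, hx.2.trans h2.2⟩
    · rw [uIcc_comm, uIcc_of_le h] at hx; exact ⟨h2.1.trans hx.1, hx.2.trans h1.2⟩
  have hψcont : ContinuousOn ψ I := by
    have h1 : ContinuousOn (fun t => c₄ * ∫ s in (0:ℝ)..t, κ (ψ s)) I := by
      apply continuousOn_const.mul
      have h2 : IntegrableOn (fun s => κ (ψ s)) (uIcc (0:ℝ) b₁) volume := by
        rwa [uIcc_of_le hb₁']
      have := intervalIntegral.continuousOn_primitive_interval h2
      rwa [uIcc_of_le hb₁'] at this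
    exact h1.congr hψeq
  -- Osgood argument: ψ vanishes on I
  have hψzero : ∀ t ∈ I, ψ t = 0 := by
    intro t₀ ht₀
    by_contra hne
    have hεpos : 0 < ψ t₀ := lt_of_le_of_ne (hψ0 t₀ ht₀) (Ne.symm hne)
    have h0I : (0:ℝ) ∈ I := left_mem_Icc.2 hb₁'
    have hψzero0 : ψ 0 = 0 := le_antisymm (by simpa using hψle 0 h0I) (hψ0 0 h0I)
    have ht₀pos : 0 < t₀ := by
      rcases ht₀.1.eq_or_lt with h | h
      · exact absurd (h ▸ hψzero0) hne
      · exact h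
    set ε := ψ t₀ with hεdef
    set S : Set ℝ := Icc 0 t₀ ∩ ψ ⁻¹' {0} with hSdef
    have hsubI : Icc (0:ℝ) t₀ ⊆ I := Icc_subset_Icc le_rfl ht₀.2
    have hSclosed : IsClosed S :=
      (hψcont.mono hsubI).preimage_isClosed_of_isClosed isClosed_Icc isClosed_singleton
    have hSne : S.Nonempty := ⟨0, ⟨le_rfl, ht₀pos.le⟩, hψzero0⟩
    have hSbdd : BddAbove S := ⟨t₀, fun x hx => hx.1.2⟩
    set a := sSup S with hadef
    have haS : a ∈ S := hSclosed.csSup_mem hSne hSbdd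
    have haI : a ∈ Icc (0:ℝ) t₀ := haS.1
    have hψa : ψ a = 0 := haS.2
    have hat₀ : a < t₀ := lt_of_le_of_ne haI.2 (fun h => hne (by rw [hεdef, ← h]; exact hψa))
    have hpos : ∀ x, a < x → x ≤ t₀ → 0 < ψ x := by
      intro x hax hxt
      have hxI : x ∈ Icc (0:ℝ) t₀ := ⟨haI.1.trans hax.le, hxt⟩
      rcases (hψ0 x (hsubI hxI)).eq_or_lt with h | h
      · exact absurd (le_csSup hSbdd ⟨hxI, h.symm⟩) (not_le.2 hax)
      · exact h
    set f : ℝ → ℝ := fun x => 1 / κ x with hfdef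
    have hfc : ∀ y : ℝ, 0 < y → ContinuousAt f y := by
      intro y hy
      have hκy : ContinuousAt κ y := hκcont.continuousAt (Ici_mem_nhds hy)
      exact continuousAt_const.div hκy (ne_of_gt (hκpos y hy))
    set G : ℝ → ℝ := fun y => ∫ x in y..ε, f x with hGdef
    have hGid : ∀ s, a < s → s ≤ t₀ → G (ψ s) = c₄ * (t₀ - s) := by
      intro s has hst
      have hsI : s ∈ I := hsubI ⟨haI.1.trans has.le, hst⟩
      have hspos : 0 < s := lt_of_le_of_lt haI.1 has
      have hψs : 0 < ψ s := hpos s has hst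
      have hsubI2 : Icc s t₀ ⊆ I := fun x hx => hsubI ⟨hspos.le.trans hx.1, hx.2⟩
      have hmapsto : ∀ x ∈ Icc s t₀, ψ x ∈ Icc (ψ s) ε := fun x hx =>
        ⟨hψmono s hsI x (hsubI2 hx) hx.1, hψmono x (hsubI2 hx) t₀ ht₀ hx.2⟩
      have hψsε : ψ s ≤ ε := hψmono s hsI t₀ ht₀ hst
      have hfcont : ContinuousOn f (Icc (ψ s) ε) := fun y hy =>
        (hfc y (hψs.trans_le hy.1)).continuousWithinAt
      have hGcont : ContinuousOn G (Icc (ψ s) ε) := by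
        have hint : IntegrableOn f (uIcc ε (ψ s)) volume := by
          rw [uIcc_comm, uIcc_of_le hψsε]
          exact hfcont.integrableOn_Icc
        have h1 := intervalIntegral.continuousOn_primitive_interval hint
        rw [uIcc_comm, uIcc_of_le hψsε] at h1
        have h2 : ContinuousOn (fun y => -∫ x in ε..y, f x) (Icc (ψ s) ε) := h1.neg
        apply h2.congr
        intro y _
        exact intervalIntegral.integral_symm ε y
      set K : ℝ → ℝ := fun x => G (ψ x) + c₄ * x with hKdef
      have hKcont : ContinuousOn K (Icc s t₀) :=
        (hGcont.comp (hψcont.mono hsubI2) hmapsto).add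
          (continuousOn_const.mul continuousOn_id)
      have hKderiv : ∀ x ∈ Ico s t₀, HasDerivWithinAt K 0 (Ici x) x := by
        intro x hx
        have hxI : x ∈ I := hsubI2 ⟨hx.1, hx.2.le⟩
        have hxpos : 0 < x := hspos.trans_le hx.1
        have hxlt : x < b₁ := lt_of_lt_of_le hx.2 ht₀.2
        have hψx : 0 < ψ x := hpos x (has.trans_le hx.1) hx.2.le
        have hmem : I ∈ nhds x := Icc_mem_nhds hxpos hxlt
        have hhcont : ContinuousOn (fun u => κ (ψ u)) I :=
          hκcont.comp hψcont fun u hu => mem_Ici.2 (hψ0 u hu)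
        have hFTC : HasDerivAt (fun u => ∫ v in (0:ℝ)..u, κ (ψ v)) (κ (ψ x)) x := by
          apply intervalIntegral.integral_hasDerivAt_right (hψIInt 0 x h0I hxI)
          · exact ContinuousOn.stronglyMeasurableAtFilter isOpen_Ioo
              (hhcont.mono Ioo_subset_Icc_self) x ⟨hxpos, hxlt⟩
          · exact hhcont.continuousAt hmem
        have hψder : HasDerivAt ψ (c₄ * κ (ψ x)) x := by
          have h1 : HasDerivAt (fun u => c₄ * ∫ v in (0:ℝ)..u, κ (ψ v)) (c₄ * κ (ψ x)) x :=
            hFTC.const_mul c₄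
          apply h1.congr_of_eventuallyEq
          filter_upwards [hmem] with u hu using hψeq u hu
        have hGder : HasDerivAt G (-(f (ψ x))) (ψ x) := by
          apply intervalIntegral.integral_hasDerivAt_left
          · apply ContinuousOn.intervalIntegrable
            intro y hy
            have hle : ψ x ≤ ε := (hmapsto x ⟨hx.1, hx.2.le⟩).2
            rw [uIcc_of_le hle] at hy
            exact (hfc y (hψx.trans_le hy.1)).continuousWithinAt
          · exact ContinuousOn.stronglyMeasurableAtFilter isOpen_Ioi
              (fun y hy => (hfc y hy).continuousWithinAt) _ hψx
          · exact hfc _ hψx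
        have hcomp : HasDerivAt (fun u => G (ψ u)) (-(f (ψ x)) * (c₄ * κ (ψ x))) x :=
          hGder.comp x hψder
        have hK' : HasDerivAt K (-(f (ψ x)) * (c₄ * κ (ψ x)) + c₄ * 1) x :=
          hcomp.add ((hasDerivAt_id x).const_mul c₄)
        have hz : -(f (ψ x)) * (c₄ * κ (ψ x)) + c₄ * 1 = 0 := by
          have hκne : κ (ψ x) ≠ 0 := ne_of_gt (hκpos _ hψx)
          simp only [hfdef]
          field_simp
          ring
        rw [hz] at hK'
        exact hK'.hasDerivWithinAt
      have hconst := constant_of_has_deriv_right_zero hKcont hKderiv t₀ ⟨hst, le_rfl⟩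
      have hGε : G ε = 0 := intervalIntegral.integral_same
      simp only [hKdef] at hconst
      rw [← hεdef, hGε] at hconst
      linarith
    have hnb : (nhdsWithin a (Ioc a t₀)).NeBot := by
      rw [nhdsWithin_Ioc_eq_nhdsGT hat₀]
      infer_instance
    have h1 : Tendsto ψ (nhdsWithin a (Ioc a t₀)) (nhdsWithin 0 (Ioi 0)) := by
      rw [tendsto_nhdsWithin_iff]
      constructor
      · have h2 : Tendsto ψ (nhdsWithin a I) (nhds (ψ a)) := (hψcont a (hsubI haI)).tendsto
        rw [hψa] at h2
        exact h2.mono_left (nhdsWithin_mono a fun x hx => hsubI ⟨haI.1.trans hx.1.le, hx.2⟩)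
      · filter_upwards [eventually_mem_nhdsWithin] with x hx using hpos x hx.1 hx.2
    have h2 : Tendsto (fun s => G (ψ s)) (nhdsWithin a (Ioc a t₀)) atTop :=
      (hκdiv ε hεpos).comp h1
    have h3 : ∀ᶠ s in nhdsWithin a (Ioc a t₀), G (ψ s) ≤ c₄ * t₀ := by
      filter_upwards [eventually_mem_nhdsWithin] with s hs
      rw [hGid s hs.1 hs.2]
      have hs0 : 0 ≤ s := haI.1.trans hs.1.le
      nlinarith
    obtain ⟨s, hle, hgt⟩ := (h3.and (h2.eventually_gt_atTop (c₄ * t₀))).exists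
    linarith
  -- conclusion
  intro t ht
  have h := htend t ht
  rw [hψzero t ht] at h
  exact (Filter.tendsto_add_atTop_iff_nat 1).1 h
end
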